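/- arXiv:1309.2363 — 9 statements merged into one kernel-verified Lean document; each statement's English description precedes it below -/
import Mathlib

section
/- Let Γ be a totally ordered abelian group with positive cone Γ⁺ = {x : x ≥ 0}, and let V : Γ⁺ → B(H) be a semigroup homomorphism into partial isometries (V_{s+t} = V_s V_t, each V_s a partial isometry). Then for every s, t ∈ Γ⁺ the projections V_s V_s† and V_t V_t† commute. -/
open ContinuousLinearMap

/-- If `V` is a partial-isometric representation of the positive cone `Γ⁺` of a totally
ordered abelian group `Γ` on a Hilbert space, then the final projections `V_s V_s†` and
`V_t V_t†` commute for all `s, t ∈ Γ⁺`. -/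
theorem final_projections_commute
    {Γ : Type*} [AddCommGroup Γ] [LinearOrder Γ] [IsOrderedAddMonoid Γ]
    {H : Type*} [NormedAddCommGroup H] [InnerProductSpace ℂ H] [CompleteSpace H]
    (V : Γ → (H →L[ℂ] H))
    (hV0 : V 0 = 1)
    (hVadd : ∀ s t : Γ, 0 ≤ s → 0 ≤ t → V (s + t) = V s * V t)
    (hVpiso : ∀ s : Γ, 0 ≤ s → V s * adjoint (V s) * V s = V s)
    (s t : Γ) (hs : 0 ≤ s) (ht : 0 ≤ t) :
    (V s * adjoint (V s)) * (V t * adjoint (V t)) =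
      (V t * adjoint (V t)) * (V s * adjoint (V s)) := by
  -- main step: if a ≤ b then E_a * E_b = E_b = E_b * E_a
  have key : ∀ a b : Γ, 0 ≤ a → a ≤ b →
      (V a * adjoint (V a)) * (V b * adjoint (V b)) = V b * adjoint (V b) ∧
      (V b * adjoint (V b)) * (V a * adjoint (V a)) = V b * adjoint (V b) := by
    intro a b ha hab
    set c := b - a with hc
    have hc0 : 0 ≤ c := sub_nonneg.mpr hab
    have hb : V b = V a * V c := by
      have := hVadd a c ha hc0
      rwa [show a + c = b by simp [hc]] at this
    set P := V a
    set R := V c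
    set Q := adjoint (V a) with hQ
    set S := adjoint (V c) with hS
    have hsa : ∀ A B : H →L[ℂ] H, adjoint (A * B) = adjoint B * adjoint A := by
      intro A B
      rw [← star_eq_adjoint, ← star_eq_adjoint, ← star_eq_adjoint, star_mul]
    have hadj : adjoint (V b) = S * Q := by
      rw [hb, hQ, hS, hsa]
    have h1 : P * Q * P = P := hVpiso a ha
    have h2 : Q * P * Q = Q := by
      have := congrArg adjoint h1
      rwa [hsa, hsa, adjoint_adjoint, ← hQ, ← mul_assoc] at this
    rw [hb, hsa, ← hQ, ← hS]
    constructor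
    · calc P * Q * (P * R * (S * Q)) = (P * Q * P) * (R * (S * Q)) := by
            simp only [mul_assoc]
        _ = P * R * (S * Q) := by rw [h1]; simp only [mul_assoc]
    · calc P * R * (S * Q) * (P * Q) = (P * R * S) * (Q * P * Q) := by
            simp only [mul_assoc]
        _ = P * R * (S * Q) := by rw [h2]; simp only [mul_assoc]
  rcases le_total s t with h | h
  · rw [(key s t hs h).1, (key s t hs h).2]
  · rw [(key t s ht h).1, (key t s ht h).2]
end

section
/- Under the same hypotheses, for every s, t ∈ Γ⁺ the projections V_s† V_s and V_t† V_t commute. -/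
open ContinuousLinearMap

/-- If `V` is a partial-isometric representation of the positive cone `Γ⁺` of a totally
ordered abelian group `Γ` on a Hilbert space, then the initial projections `V_s† V_s` and
`V_t† V_t` commute for all `s, t ∈ Γ⁺`. -/
theorem initial_projections_commute
    {Γ : Type*} [AddCommGroup Γ] [LinearOrder Γ] [IsOrderedAddMonoid Γ]
    {H : Type*} [NormedAddCommGroup H] [InnerProductSpace ℂ H] [CompleteSpace H]
    (V : Γ → (H →L[ℂ] H))
    (hV0 : V 0 = 1)
    (hVadd : ∀ s t : Γ, 0 ≤ s → 0 ≤ t → V (s + t) = V s * V t)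
    (hVpiso : ∀ s : Γ, 0 ≤ s → V s * adjoint (V s) * V s = V s)
    (s t : Γ) (hs : 0 ≤ s) (ht : 0 ≤ t) :
    (adjoint (V s) * V s) * (adjoint (V t) * V t) =
      (adjoint (V t) * V t) * (adjoint (V s) * V s) := by
  have key : ∀ a b : Γ, 0 ≤ a → 0 ≤ b → a ≤ b →
      (adjoint (V a) * V a) * (adjoint (V b) * V b) = adjoint (V b) * V b ∧
      (adjoint (V b) * V b) * (adjoint (V a) * V a) = adjoint (V b) * V b := by
    intro a b ha hb hab
    have hc : (0 : Γ) ≤ b - a := sub_nonneg.mpr hab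
    have hb' : V b = V (b - a) * V a := by
      have h := hVadd (b - a) a hc ha
      rwa [sub_add_cancel] at h
    have hpa := hVpiso a ha
    have hpa' : adjoint (V a) * V a * adjoint (V a) = adjoint (V a) := by
      have h := congrArg adjoint hpa
      simpa only [mul_def, adjoint_comp, adjoint_adjoint, comp_assoc] using h
    have hQb : adjoint (V b) * V b
        = adjoint (V a) * (adjoint (V (b - a)) * V (b - a)) * V a := by
      rw [hb']
      simp only [mul_def, adjoint_comp, comp_assoc]
    constructor
    · rw [hQb]
      calc adjoint (V a) * V a * (adjoint (V a) * (adjoint (V (b - a)) * V (b - a)) * V a)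
          = (adjoint (V a) * V a * adjoint (V a)) * (adjoint (V (b - a)) * V (b - a)) * V a := by
            noncomm_ring
        _ = adjoint (V a) * (adjoint (V (b - a)) * V (b - a)) * V a := by rw [hpa']
    · rw [hQb]
      calc adjoint (V a) * (adjoint (V (b - a)) * V (b - a)) * V a * (adjoint (V a) * V a)
          = adjoint (V a) * (adjoint (V (b - a)) * V (b - a)) * (V a * adjoint (V a) * V a) := by
            noncomm_ring
        _ = adjoint (V a) * (adjoint (V (b - a)) * V (b - a)) * V a := by rw [hpa]
  rcases le_total s t with h | h
  · obtain ⟨h1, h2⟩ := key s t hs ht h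
    rw [h1, h2]
  · obtain ⟨h1, h2⟩ := key t s ht hs h
    rw [h1, h2]
end

section
/- Let v : Γ⁺ → A be a semigroup of partial isometries in a unital C*-algebra such that the initial projections v_x† v_x pairwise commute with final projections. Then for x, y ∈ Γ⁺: (v_x† v_x)(v_y† v_y) = v_m† v_m where m = max(x, y). -/
private lemma init_mul_init_of_le
    {Γ : Type*} [AddCommGroup Γ] [LinearOrder Γ] [IsOrderedAddMonoid Γ]
    {A : Type*} [CStarAlgebra A]
    (v : Γ → A)
    (hadd : ∀ x y : Γ, 0 ≤ x → 0 ≤ y → v (x + y) = v x * v y)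
    (hpiso : ∀ x : Γ, 0 ≤ x → v x * star (v x) * v x = v x)
    (x y : Γ) (hx : 0 ≤ x) (hxy : x ≤ y) :
    (star (v x) * v x) * (star (v y) * v y) = star (v y) * v y := by
  have hz : (0:Γ) ≤ y - x := sub_nonneg.mpr hxy
  have hvy : v y = v (y - x) * v x := by
    have := hadd (y - x) x hz hx
    rwa [sub_add_cancel] at this
  set a := v x with ha
  set b := v (y - x) with hb
  have key : star a * a * star a = star a := by
    have h := congrArg star (hpiso x hx)
    simpa [star_mul, mul_assoc] using h
  rw [hvy]
  calc (star a * a) * (star (b * a) * (b * a))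
      = (star a * a * star a) * (star b * (b * a)) := by
        simp [star_mul, mul_assoc]
    _ = star a * (star b * (b * a)) := by rw [key]
    _ = star (b * a) * (b * a) := by simp [star_mul, mul_assoc]

/-- For a semigroup of partial isometries `v : Γ⁺ → A` in a unital C*-algebra whose
initial projections commute with final projections, the initial projections satisfy
`(v_x† v_x)(v_y† v_y) = v_m† v_m` where `m = max (x, y)`. -/
theorem initial_projections_mul_eq_max
    {Γ : Type*} [AddCommGroup Γ] [LinearOrder Γ] [IsOrderedAddMonoid Γ]
    {A : Type*} [CStarAlgebra A]
    (v : Γ → A)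
    (hv0 : v 0 = 1)
    (hadd : ∀ x y : Γ, 0 ≤ x → 0 ≤ y → v (x + y) = v x * v y)
    (hpiso : ∀ x : Γ, 0 ≤ x → v x * star (v x) * v x = v x)
    (hcomm : ∀ x y : Γ, 0 ≤ x → 0 ≤ y →
      (star (v x) * v x) * (v y * star (v y)) = (v y * star (v y)) * (star (v x) * v x))
    (x y : Γ) (hx : 0 ≤ x) (hy : 0 ≤ y) :
    (star (v x) * v x) * (star (v y) * v y) = star (v (max x y)) * v (max x y) := by
  rcases le_total x y with h | h
  · rw [max_eq_right h]
    exact init_mul_init_of_le v hadd hpiso x y hx h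
  · rw [max_eq_left h]
    have := init_mul_init_of_le v hadd hpiso y x hy h
    have hstar := congrArg star this
    simpa [star_mul, mul_assoc] using hstar
end

section
/- With P_t = 1 − v_t† v_t for a partial-isometric semigroup representation v of Γ⁺ in a unital C*-algebra, the family {P_t} is increasing: s ≥ t implies P_s ≥ P_t (as self-adjoint elements, P_s − P_t is positive). In fact P_s − P_t = (P_{s−t} v_t)† (P_{s−t} v_t). -/
/-- For `P_t = 1 − v_t† v_t`, with `v` a partial-isometric semigroup representation of
`Γ⁺` in a unital C*-algebra, the family `{P_t}` is increasing: if `t ≤ s` then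
`P_s − P_t = (P_{s−t} v_t)† (P_{s−t} v_t)`, and in particular `P_t ≤ P_s`. -/
theorem P_increasing
    {Γ : Type*} [AddCommGroup Γ] [LinearOrder Γ] [IsOrderedAddMonoid Γ]
    {A : Type*} [CStarAlgebra A] [PartialOrder A] [StarOrderedRing A]
    (v : Γ → A)
    (hv0 : v 0 = 1)
    (hadd : ∀ x y : Γ, 0 ≤ x → 0 ≤ y → v (x + y) = v x * v y)
    (hpiso : ∀ x : Γ, 0 ≤ x → v x * star (v x) * v x = v x)
    (P : Γ → A) (hP : ∀ t : Γ, P t = 1 - star (v t) * v t)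
    (s t : Γ) (ht : 0 ≤ t) (hts : t ≤ s) :
    P s - P t = star (P (s - t) * v t) * (P (s - t) * v t) ∧ P t ≤ P s := by
  set u := s - t with hu
  have hu0 : 0 ≤ u := sub_nonneg.mpr hts
  have hvs : v s = v u * v t := by
    rw [← hadd u t hu0 ht, hu, sub_add_cancel]
  set q := star (v u) * v u with hqdef
  have hq_sa : star q = q := by simp [hqdef, star_mul, mul_assoc]
  have hq_idem : q * q = q := by
    calc q * q = star (v u) * (v u * star (v u) * v u) := by
          simp [hqdef, mul_assoc]
      _ = q := by rw [hpiso u hu0]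
  have h1 : (1 - q) * (1 - q) = 1 - q := by
    simp [sub_mul, mul_sub, hq_idem]
  have key : P s - P t = star (P u * v t) * (P u * v t) := by
    rw [hP u]
    calc P s - P t
        = star (v t) * v t - star (v t) * q * v t := by
          rw [hP s, hP t, hvs, star_mul, hqdef]; noncomm_ring
      _ = star (v t) * ((1 - q) * (1 - q)) * v t := by
          rw [h1]; noncomm_ring
      _ = star ((1 - q) * v t) * ((1 - q) * v t) := by
          rw [star_mul, star_sub, star_one, hq_sa]; noncomm_ring
  refine ⟨key, ?_⟩
  have : 0 ≤ P s - P t := key ▸ star_mul_self_nonneg _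
  exact sub_nonneg.mp this
end

section
/- With P_t = 1 − v_t† v_t as above, for x ≤ y in Γ⁺ we have P_x · v_y† = 0, and for x > y we have P_x · v_y† = v_y† · P_{x−y}, provided additionally that v_y v_y† commutes with v_{x−y}† v_{x−y} for all relevant x, y. -/
/-- For `P_t = 1 − v_t† v_t` and a partial-isometric semigroup representation `v` of `Γ⁺`
whose final projections commute with initial projections: if `x ≤ y` then
`P_x v_y† = 0`, and if `x > y` then `P_x v_y† = v_y† P_{x−y}`. -/
theorem P_mul_star_v
    {Γ : Type*} [AddCommGroup Γ] [LinearOrder Γ] [IsOrderedAddMonoid Γ]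
    {A : Type*} [CStarAlgebra A]
    (v : Γ → A)
    (hv0 : v 0 = 1)
    (hadd : ∀ x y : Γ, 0 ≤ x → 0 ≤ y → v (x + y) = v x * v y)
    (hpiso : ∀ x : Γ, 0 ≤ x → v x * star (v x) * v x = v x)
    (hcomm : ∀ x y : Γ, 0 ≤ x → 0 ≤ y →
      (v x * star (v x)) * (star (v y) * v y) = (star (v y) * v y) * (v x * star (v x)))
    (P : Γ → A) (hP : ∀ t : Γ, P t = 1 - star (v t) * v t)
    (x y : Γ) (hx : 0 ≤ x) (hy : 0 ≤ y) :
    (x ≤ y → P x * star (v y) = 0) ∧ (y < x → P x * star (v y) = star (v y) * P (x - y)) := by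
  have hstar : ∀ t : Γ, 0 ≤ t → star (v t) * v t * star (v t) = star (v t) := by
    intro t ht
    have h := congrArg star (hpiso t ht)
    simpa [star_mul, mul_assoc] using h
  constructor
  · intro hxy
    set z := y - x with hzdef
    have hz0 : 0 ≤ z := sub_nonneg.2 hxy
    have hvy : v y = v z * v x := by
      rw [← hadd z x hz0 hx, sub_add_cancel]
    -- q_x * q_y = q_y
    have hq : (star (v x) * v x) * (star (v y) * v y) = star (v y) * v y := by
      conv_lhs => rw [hvy]
      conv_rhs => rw [hvy]
      simp only [star_mul, ← mul_assoc]
      rw [hstar x hx]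
    have hB : (star (v y) * v y) * star (v y) = star (v y) := by
      simpa [mul_assoc] using hstar y hy
    have h0 : (1 - star (v x) * v x) * (star (v y) * v y) = 0 := by
      rw [sub_mul, one_mul, hq, sub_self]
    rw [hP]
    calc (1 - star (v x) * v x) * star (v y)
        = (1 - star (v x) * v x) * ((star (v y) * v y) * star (v y)) := by rw [hB]
      _ = ((1 - star (v x) * v x) * (star (v y) * v y)) * star (v y) := by
          simp only [mul_assoc]
      _ = 0 := by rw [h0, zero_mul]
  · intro hyx
    set w := x - y with hwdef
    have hw0 : 0 ≤ w := sub_nonneg.2 hyx.le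
    have hvx : v x = v w * v y := by
      rw [← hadd w y hw0 hy, sub_add_cancel]
    -- q_x * v_y† = v_y† * q_w
    have hkey : (star (v x) * v x) * star (v y) = star (v y) * (star (v w) * v w) := by
      conv_lhs => rw [hvx]
      -- LHS = v_y† v_w† v_w v_y v_y†
      have h1 : star (v y) * (star (v w) * v w)
          = star (v y) * ((star (v w) * v w) * (v y * star (v y))) := by
        rw [← hcomm y w hy hw0]
        simp only [← mul_assoc]
        rw [hstar y hy]
      rw [h1]
      simp only [star_mul, ← mul_assoc]
    rw [hP, hP]
    rw [sub_mul, one_mul, mul_sub, mul_one, hkey]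
end

section
/- Suppose Γ is an Archimedean totally ordered abelian group (a subgroup of ℝ), v : Γ⁺ → A a semigroup of partial isometries with v 0 = 1 in a unital C*-algebra satisfying the commutation relations of a partial-isometric representation. If v_s is an isometry (v_s† v_s = 1) for some s > 0, then v_x is an isometry for every x ∈ Γ⁺. -/
/-- If `Γ` is an Archimedean totally ordered abelian group and `v : Γ⁺ → A` is a
partial-isometric semigroup representation (with commuting final/initial projections)
in a unital C*-algebra such that `v_s` is an isometry for some `s > 0`, then `v_x` is an
isometry for every `x ∈ Γ⁺`. -/
theorem all_isometries_of_isometry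
    {Γ : Type*} [AddCommGroup Γ] [LinearOrder Γ] [IsOrderedAddMonoid Γ]
    (harch : ∀ x s : Γ, 0 < s → ∃ n : ℕ, x < n • s)
    {A : Type*} [CStarAlgebra A]
    (v : Γ → A)
    (hv0 : v 0 = 1)
    (hadd : ∀ x y : Γ, 0 ≤ x → 0 ≤ y → v (x + y) = v x * v y)
    (hpiso : ∀ x : Γ, 0 ≤ x → v x * star (v x) * v x = v x)
    (hcomm : ∀ x y : Γ, 0 ≤ x → 0 ≤ y →
      (v x * star (v x)) * (star (v y) * v y) = (star (v y) * v y) * (v x * star (v x)))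
    (s : Γ) (hs : 0 < s) (hiso : star (v s) * v s = 1)
    (x : Γ) (hx : 0 ≤ x) :
    star (v x) * v x = 1 := by
  -- v (n • s) is an isometry for every n
  have hiter : ∀ n : ℕ, star (v (n • s)) * v (n • s) = 1 := by
    intro n
    induction n with
    | zero => simp [hv0]
    | succ k ih =>
      have hks : 0 ≤ k • s := nsmul_nonneg hs.le k
      have hsplit : v ((k + 1) • s) = v (k • s) * v s := by
        rw [succ_nsmul, hadd _ _ hks hs.le]
      rw [hsplit, star_mul, mul_assoc, ← mul_assoc (star (v (k • s))), ih, one_mul, hiso]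
  obtain ⟨n, hn⟩ := harch x s hs
  set y : Γ := n • s - x with hy
  have hy0 : 0 ≤ y := by rw [hy, sub_nonneg]; exact hn.le
  have hxy : x + y = n • s := by rw [hy]; abel
  have hyx : y + x = n • s := by rw [hy]; abel
  -- key identity: v_y† (v_x† v_x) v_y = 1
  have h1 : v (n • s) = v x * v y := by rw [← hxy, hadd x y hx hy0]
  have hkey : star (v y) * (star (v x) * v x) * v y = 1 := by
    have h := hiter n
    rw [h1, star_mul] at h
    simp only [mul_assoc] at h ⊢
    exact h
  -- e = v_y v_y† is idempotent
  have hee : (v y * star (v y)) * (v y * star (v y)) = v y * star (v y) := by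
    rw [← mul_assoc, hpiso y hy0]
  -- e p e = e
  have hepe : (v y * star (v y)) * (star (v x) * v x) * (v y * star (v y))
      = v y * star (v y) := by
    have hassoc : (v y * star (v y)) * (star (v x) * v x) * (v y * star (v y))
        = v y * (star (v y) * (star (v x) * v x) * v y) * star (v y) := by
      simp only [mul_assoc]
    rw [hassoc, hkey, mul_one]
  -- p e = e
  have hpe : (star (v x) * v x) * (v y * star (v y)) = v y * star (v y) := by
    have hcom' := hcomm y x hy0 hx
    calc (star (v x) * v x) * (v y * star (v y))
        = (star (v x) * v x) * ((v y * star (v y)) * (v y * star (v y))) := by rw [hee]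
      _ = ((star (v x) * v x) * (v y * star (v y))) * (v y * star (v y)) := by
          simp only [mul_assoc]
      _ = ((v y * star (v y)) * (star (v x) * v x)) * (v y * star (v y)) := by rw [← hcom']
      _ = v y * star (v y) := hepe
  -- q = v_y† v_y = 1
  have hq1 : star (v y) * v y = 1 := by
    have : (1 : A) = star (v y) * v y := by
      calc (1 : A) = star (v y) * (star (v x) * v x) * v y := hkey.symm
        _ = star (v y) * ((star (v x) * v x) * (v y * star (v y) * v y)) := by
            rw [hpiso y hy0]; simp only [mul_assoc]
        _ = star (v y) * ((star (v x) * v x) * (v y * star (v y)) * v y) := by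
            simp only [mul_assoc]
        _ = star (v y) * ((v y * star (v y)) * v y) := by rw [hpe]
        _ = star (v y) * v y := by rw [hpiso y hy0]
    exact this.symm
  -- conclude using the other decomposition n • s = y + x
  have h2 : v (n • s) = v y * v x := by rw [← hyx, hadd y x hy0 hx]
  have h3 := hiter n
  rw [h2, star_mul] at h3
  calc star (v x) * v x = star (v x) * ((star (v y) * v y) * v x) := by rw [hq1, one_mul]
    _ = 1 := by simp only [mul_assoc] at h3 ⊢; exact h3
end

section
/- Let s > 0 and suppose v_s† v_s = 1 for a partial-isometric semigroup representation v (with commuting initial/final projections). Then for every x < s, v_{s−x}† · v_s = v_x, and consequently v_x† v_x = 1. -/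
/-- Suppose `v_s† v_s = 1` for a partial-isometric semigroup representation `v` of `Γ⁺`
(with commuting final/initial projections) and `s > 0`. Then for every `0 ≤ x < s`,
`v_{s−x}† v_s = v_x`, and consequently `v_x` is an isometry. -/
theorem isometry_below_isometry
    {Γ : Type*} [AddCommGroup Γ] [LinearOrder Γ] [IsOrderedAddMonoid Γ]
    {A : Type*} [CStarAlgebra A]
    (v : Γ → A)
    (hv0 : v 0 = 1)
    (hadd : ∀ x y : Γ, 0 ≤ x → 0 ≤ y → v (x + y) = v x * v y)
    (hpiso : ∀ x : Γ, 0 ≤ x → v x * star (v x) * v x = v x)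
    (hcomm : ∀ x y : Γ, 0 ≤ x → 0 ≤ y →
      (v x * star (v x)) * (star (v y) * v y) = (star (v y) * v y) * (v x * star (v x)))
    (s : Γ) (hs : 0 < s) (hiso : star (v s) * v s = 1)
    (x : Γ) (hx : 0 ≤ x) (hxs : x < s) :
    star (v (s - x)) * v s = v x ∧ star (v x) * v x = 1 := by
  have hy : (0 : Γ) ≤ s - x := sub_nonneg.mpr hxs.le
  set y := s - x with hy_def
  have hsyx : v s = v y * v x := by
    have hsum : s = y + x := by simp [hy_def]
    rw [hsum, hadd y x hy hx]
  set p := star (v y) * v y with hp_def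
  set q := star (v x) * v x with hq_def
  have hp2 : p * p = p := by
    have h := hpiso y hy
    calc p * p = star (v y) * (v y * star (v y) * v y) := by
          simp [hp_def, mul_assoc]
      _ = p := by rw [h]
  have hq2 : q * q = q := by
    have h := hpiso x hx
    calc q * q = star (v x) * (v x * star (v x) * v x) := by
          simp [hq_def, mul_assoc]
      _ = q := by rw [h]
  have hpstar : star p = p := by simp [hp_def, star_mul, mul_assoc]
  have hqstar : star q = q := by simp [hq_def, star_mul, mul_assoc]
  -- from hiso: star (v x) * (p * v x) = 1
  have hkey : star (v x) * (p * v x) = 1 := by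
    have h := hiso
    rw [hsyx, star_mul] at h
    calc star (v x) * (p * v x)
        = star (v x) * star (v y) * (v y * v x) := by
          simp [hp_def, mul_assoc]
      _ = 1 := h
  set a := v x - p * v x with ha_def
  have hstar_a : star a = star (v x) - star (v x) * p := by
    rw [ha_def, star_sub, star_mul, hpstar]
  have haa : star a * a = q - 1 := by
    rw [hstar_a, ha_def]
    have e : (star (v x) - star (v x) * p) * (v x - p * v x)
        = q - star (v x) * (p * v x)
          - (star (v x) * (p * v x) - star (v x) * (p * (p * v x))) := by
      rw [hq_def]; noncomm_ring
    rw [e, ← mul_assoc p p, hp2, hkey]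
    abel
  -- install the spectral order
  let _ : PartialOrder A := CStarAlgebra.spectralOrder A
  have _i : StarOrderedRing A := CStarAlgebra.spectralOrderedRing A
  have h1 : (0 : A) ≤ q - 1 := haa ▸ star_mul_self_nonneg a
  have h2 : (0 : A) ≤ 1 - q := by
    have heq : star (1 - q) * (1 - q) = 1 - q := by
      rw [star_sub, star_one, hqstar]
      have : (1 - q) * (1 - q) = 1 - q - (q - q * q) := by noncomm_ring
      rw [this, hq2]; abel
    have h := star_mul_self_nonneg (1 - q)
    rwa [heq] at h
  have hq1 : q = 1 := le_antisymm (sub_nonneg.mp h2) (sub_nonneg.mp h1)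
  have ha0 : a = 0 := by
    have h0 : star a * a = 0 := by rw [haa, hq1, sub_self]
    exact (CStarRing.star_mul_self_eq_zero_iff a).mp h0
  have hpvx : p * v x = v x := (sub_eq_zero.mp ha0).symm
  refine ⟨?_, hq1⟩
  rw [hsyx, ← mul_assoc]
  calc star (v y) * v y * v x = p * v x := by rw [hp_def]
    _ = v x := hpvx
end

section
/- Let (A, ℕ, α) be a system with α an endomorphism of the C*-algebra A, and define π_α : A → L(ℓ²(ℕ, A)) by (π_α(a) f)(n) = αⁿ(a) · f(n). Then π_α is an injective *-homomorphism and satisfies π_α(a) ∘ S = S ∘ π_α(α(a)) where S is the unilateral shift. -/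
/-- The unilateral shift on `ℓ²(ℕ, A)`. -/
def shiftOp {A : Type*} [Zero A] (f : ℕ → A) : ℕ → A
  | 0 => 0
  | n + 1 => f n

/-- The diagonal representation `π_α : A → L(ℓ²(ℕ, A))`, `(π_α(a) f)(n) = αⁿ(a) f(n)`. -/
def piMap {A : Type*} [Mul A] (α : A → A) (a : A) (f : ℕ → A) : ℕ → A :=
  fun n => α^[n] a * f n

section Aux

variable {A : Type*} [NonUnitalCStarAlgebra A] (α : A →⋆ₙₐ[ℂ] A)

lemma iterNormLe (a : A) (n : ℕ) : ‖(⇑α)^[n] a‖ ≤ ‖a‖ := by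
  induction n with
  | zero => simp
  | succ n ih =>
    rw [Function.iterate_succ_apply']
    exact (NonUnitalStarAlgHom.norm_apply_le α _).trans ih

lemma iterAdd (a b : A) (n : ℕ) : (⇑α)^[n] (a + b) = (⇑α)^[n] a + (⇑α)^[n] b := by
  induction n with
  | zero => simp
  | succ n ih => simp [Function.iterate_succ_apply', ih, map_add]

lemma iterMul (a b : A) (n : ℕ) : (⇑α)^[n] (a * b) = (⇑α)^[n] a * (⇑α)^[n] b := by
  induction n with
  | zero => simp
  | succ n ih => simp [Function.iterate_succ_apply', ih, map_mul]

lemma iterStar (a : A) (n : ℕ) : (⇑α)^[n] (star a) = star ((⇑α)^[n] a) := by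
  induction n with
  | zero => simp
  | succ n ih => simp [Function.iterate_succ_apply', ih, map_star]

/-- Monotonicity of `algebraMap ℝ B` into a star-ordered unital algebra. -/
lemma algebraMapRealMono {B : Type*} [CStarAlgebra B] [PartialOrder B] [StarOrderedRing B]
    {r s : ℝ} (h : r ≤ s) : algebraMap ℝ B r ≤ algebraMap ℝ B s := by
  rw [← sub_nonneg, ← map_sub]
  have h0 : (0 : ℝ) ≤ s - r := by linarith
  calc (0 : B) ≤ star (algebraMap ℝ B (Real.sqrt (s - r))) * algebraMap ℝ B (Real.sqrt (s - r)) :=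
        star_mul_self_nonneg _
    _ = algebraMap ℝ B (s - r) := by
        rw [show star (algebraMap ℝ B (Real.sqrt (s - r)))
              = algebraMap ℝ B (Real.sqrt (s - r)) from
            (IsSelfAdjoint.algebraMap B (IsSelfAdjoint.all _)).star_eq,
          ← map_mul, Real.mul_self_sqrt h0]

/-- The key finite-sum norm estimate, proved in the unitization with the spectral order. -/
lemma keyEstimate (a : A) (f : ℕ → A) (t : Finset ℕ) :
    ‖∑ n ∈ t, star ((⇑α)^[n] a * f n) * ((⇑α)^[n] a * f n)‖ ≤
      ‖a‖ ^ 2 * ‖∑ n ∈ t, star (f n) * f n‖ := by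
  let B := Unitization ℂ A
  letI : PartialOrder B := CStarAlgebra.spectralOrder B
  haveI : StarOrderedRing B := CStarAlgebra.spectralOrderedRing B
  set M : ℝ := ‖a‖ ^ 2 with hM
  -- work with images in B
  have hterm : ∀ n ∈ t,
      star (((⇑α)^[n] a * f n : A) : B) * (((⇑α)^[n] a * f n : A) : B) ≤
        M • (star ((f n : B)) * (f n : B)) := by
    intro n _
    set C : B := (((⇑α)^[n] a : A) : B) with hC
    set F : B := ((f n : A) : B) with hF
    have h1 : star C * C ≤ algebraMap ℝ B M := by
      refine le_trans CStarAlgebra.star_mul_le_algebraMap_norm_sq (algebraMapRealMono ?_)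
      have : ‖C‖ = ‖(⇑α)^[n] a‖ := Unitization.norm_inr _
      rw [hM]
      have h2 : ‖C‖ ≤ ‖a‖ := this ▸ iterNormLe α a n
      exact pow_le_pow_left₀ (norm_nonneg _) h2 2
    have h2 : star F * (star C * C) * F ≤ star F * algebraMap ℝ B M * F :=
      star_left_conjugate_le_conjugate h1 F
    have h3 : star (((⇑α)^[n] a * f n : A) : B) = star F * star C := by
      simp only [C, F, Unitization.inr_mul, star_mul]
    have h4 : (((⇑α)^[n] a * f n : A) : B) = C * F := Unitization.inr_mul ℂ _ _
    have h5 : star F * algebraMap ℝ B M * F = M • (star F * F) := by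
      rw [Algebra.algebraMap_eq_smul_one, mul_smul_comm, mul_one, smul_mul_assoc]
    calc star (((⇑α)^[n] a * f n : A) : B) * (((⇑α)^[n] a * f n : A) : B)
        = star F * (star C * C) * F := by rw [h3, h4]; simp [mul_assoc]
      _ ≤ star F * algebraMap ℝ B M * F := h2
      _ = M • (star F * F) := h5
  have hsum : ∑ n ∈ t, star (((⇑α)^[n] a * f n : A) : B) * (((⇑α)^[n] a * f n : A) : B) ≤
      M • ∑ n ∈ t, star ((f n : B)) * (f n : B) := by
    rw [Finset.smul_sum]
    exact Finset.sum_le_sum hterm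
  have hnonneg : (0 : B) ≤
      ∑ n ∈ t, star (((⇑α)^[n] a * f n : A) : B) * (((⇑α)^[n] a * f n : A) : B) :=
    Finset.sum_nonneg fun n _ => star_mul_self_nonneg _
  have hnorm := CStarAlgebra.norm_le_norm_of_nonneg_of_le hnonneg hsum
  -- translate norms back to A
  have inrSum : ∀ g : ℕ → A, (((∑ n ∈ t, g n : A)) : B) = ∑ n ∈ t, ((g n : A) : B) :=
    fun g => map_sum (Unitization.inrNonUnitalStarAlgHom ℂ A) g t
  have e1 : (((∑ n ∈ t, star ((⇑α)^[n] a * f n) * ((⇑α)^[n] a * f n) : A)) : B) =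
      ∑ n ∈ t, star (((⇑α)^[n] a * f n : A) : B) * (((⇑α)^[n] a * f n : A) : B) := by
    rw [inrSum]
    exact Finset.sum_congr rfl fun n _ => by rw [Unitization.inr_mul, Unitization.inr_star]
  have e2 : (((∑ n ∈ t, star (f n) * f n : A)) : B) =
      ∑ n ∈ t, star ((f n : B)) * (f n : B) := by
    rw [inrSum]
    exact Finset.sum_congr rfl fun n _ => by rw [Unitization.inr_mul, Unitization.inr_star]
  calc ‖∑ n ∈ t, star ((⇑α)^[n] a * f n) * ((⇑α)^[n] a * f n)‖
      = ‖∑ n ∈ t, star (((⇑α)^[n] a * f n : A) : B) * (((⇑α)^[n] a * f n : A) : B)‖ := by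
        rw [← e1, Unitization.norm_inr]
    _ ≤ ‖M • ∑ n ∈ t, star ((f n : B)) * (f n : B)‖ := hnorm
    _ = M * ‖∑ n ∈ t, star (f n) * f n‖ := by
        rw [norm_smul, ← e2, Unitization.norm_inr, Real.norm_of_nonneg (by positivity)]

end Aux

/-- For a *-endomorphism `α` of a C*-algebra `A`, the map `π_α` given by
`(π_α(a) f)(n) = αⁿ(a) f(n)` is a well-defined injective *-homomorphism of `A` into the
adjointable operators on `ℓ²(ℕ, A)`, and it satisfies `π_α(a) ∘ S = S ∘ π_α(α(a))` for
the unilateral shift `S`. -/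
theorem piMap_star_hom_injective_shift
    {A : Type*} [NonUnitalCStarAlgebra A] (α : A →⋆ₙₐ[ℂ] A) :
    -- well-defined: `π_α(a) f ∈ ℓ²(ℕ, A)`
    (∀ (a : A) (f : ℕ → A), Summable (fun n => star (f n) * f n) →
        Summable (fun n => star (piMap (⇑α) a f n) * piMap (⇑α) a f n)) ∧
    -- additive
    (∀ a b : A, piMap (⇑α) (a + b) = fun f n => piMap (⇑α) a f n + piMap (⇑α) b f n) ∧
    -- multiplicative
    (∀ (a b : A) (f : ℕ → A), piMap (⇑α) (a * b) f = piMap (⇑α) a (piMap (⇑α) b f)) ∧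
    -- adjointable, with adjoint `π_α(star a)`
    (∀ (a : A) (f g : ℕ → A), Summable (fun n => star (f n) * f n) →
        Summable (fun n => star (g n) * g n) →
        ∑' n, star (piMap (⇑α) a f n) * g n = ∑' n, star (f n) * piMap (⇑α) (star a) g n) ∧
    -- injective
    (∀ a b : A, piMap (⇑α) a = piMap (⇑α) b → a = b) ∧
    -- `π_α(a) * S = S * π_α(α a)`
    (∀ (a : A) (f : ℕ → A), piMap (⇑α) a (shiftOp f) = shiftOp (piMap (⇑α) (α a) f)) := by
  refine ⟨?_, ?_, ?_, ?_, ?_, ?_⟩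
  · intro a f hf
    rw [summable_iff_vanishing_norm] at hf ⊢
    intro ε hε
    obtain ⟨s, hs⟩ := hf (ε / (‖a‖ ^ 2 + 1)) (by positivity)
    refine ⟨s, fun t ht => ?_⟩
    calc ‖∑ n ∈ t, star (piMap (⇑α) a f n) * piMap (⇑α) a f n‖
        ≤ ‖a‖ ^ 2 * ‖∑ n ∈ t, star (f n) * f n‖ := keyEstimate α a f t
      _ ≤ (‖a‖ ^ 2 + 1) * ‖∑ n ∈ t, star (f n) * f n‖ := by
          apply mul_le_mul_of_nonneg_right (by linarith) (norm_nonneg _)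
      _ < (‖a‖ ^ 2 + 1) * (ε / (‖a‖ ^ 2 + 1)) := by
          exact mul_lt_mul_of_pos_left (hs t ht) (by positivity)
      _ = ε := by field_simp
  · intro a b
    funext f n
    simp [piMap, iterAdd, add_mul]
  · intro a b f
    funext n
    simp [piMap, iterMul, mul_assoc]
  · intro a f g _ _
    refine tsum_congr fun n => ?_
    simp [piMap, star_mul, iterStar, mul_assoc]
  · intro a b h
    have h0 : ∀ x : A, a * x = b * x := fun x => by
      have := congrFun (congrFun h (fun _ => x)) 0
      simpa [piMap] using this
    have hz : (a - b) * star (a - b) = 0 := by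
      rw [sub_mul, sub_eq_zero]
      exact h0 _
    exact sub_eq_zero.mp (CStarRing.mul_star_self_eq_zero_iff (a - b) |>.mp hz)
  · intro a f
    funext n
    cases n with
    | zero => simp [piMap, shiftOp]
    | succ n => simp [piMap, shiftOp, Function.iterate_succ_apply]
end

section
/- On the Hilbert A-module ℓ²(ℕ, A), the operator Sᵐ π_α(a b†) (1 − S S†) (Sⁿ)† equals the rank-one operator θ_{f,g} where f is the sequence with f(m) = a and 0 elsewhere, and g is the sequence with g(n) = b and 0 elsewhere. In particular it is a compact (finite-rank) adjointable operator. -/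
/-- The adjoint of the unilateral shift. -/
def shiftAdjOp {A : Type*} (f : ℕ → A) : ℕ → A := fun n => f (n + 1)

/-- The operator `1 − S S†`. -/
def oneSubShiftShiftAdj {A : Type*} [Zero A] [Sub A] (f : ℕ → A) : ℕ → A :=
  fun n => f n - shiftOp (shiftAdjOp f) n

/-- The sequence supported at `m` with value `a`. -/
def deltaSeq {A : Type*} [Zero A] (m : ℕ) (a : A) : ℕ → A :=
  fun k => if k = m then a else 0

/-- The "rank-one" operator `θ_{ξ,η} : ζ ↦ ξ ⬝ ⟨η, ζ⟩` on `ℓ²(ℕ, A)`. -/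
noncomputable def thetaOp {A : Type*} [NonUnitalCStarAlgebra A]
    (ξ η ζ : ℕ → A) : ℕ → A :=
  fun k => ξ k * ∑' j, star (η j) * ζ j

lemma shiftAdjOp_iter {A : Type*} (n : ℕ) (ζ : ℕ → A) (k : ℕ) :
    shiftAdjOp^[n] ζ k = ζ (k + n) := by
  induction n generalizing ζ k with
  | zero => rfl
  | succ n ih =>
    rw [Function.iterate_succ_apply, ih]
    simp [shiftAdjOp, Nat.add_assoc, Nat.add_comm 1 n]

lemma shiftOp_iter {A : Type*} [Zero A] (m : ℕ) (f : ℕ → A) (k : ℕ) :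
    shiftOp^[m] f k = if m ≤ k then f (k - m) else 0 := by
  induction m generalizing k with
  | zero => simp
  | succ m ih =>
    rw [Function.iterate_succ_apply']
    cases k with
    | zero => simp [shiftOp]
    | succ k => simp [shiftOp, ih, Nat.succ_le_succ_iff, Nat.succ_sub_succ]

lemma oneSub_eq {A : Type*} [NonUnitalNonAssocRing A] (f : ℕ → A) (k : ℕ) :
    oneSubShiftShiftAdj f k = if k = 0 then f 0 else 0 := by
  cases k with
  | zero => simp [oneSubShiftShiftAdj, shiftOp]
  | succ k => simp [oneSubShiftShiftAdj, shiftOp, shiftAdjOp]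

lemma key {A : Type*} [NonUnitalCStarAlgebra A] (α : A →⋆ₙₐ[ℂ] A)
    (m n : ℕ) (a b : A) (ζ : ℕ → A) (k : ℕ) :
    shiftOp^[m] (piMap (⇑α) (a * star b) (oneSubShiftShiftAdj (shiftAdjOp^[n] ζ))) k
      = if k = m then a * star b * ζ n else 0 := by
  rw [shiftOp_iter]
  rcases lt_trichotomy k m with h | h | h
  · simp [Nat.not_le.mpr h, (Nat.ne_of_lt h)]
  · subst h
    simp [piMap, oneSub_eq, shiftAdjOp_iter]
  · rw [if_pos h.le, if_neg (Nat.ne_of_gt h)]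
    have hk : k - m ≠ 0 := Nat.sub_ne_zero_of_lt h
    simp [piMap, oneSub_eq, hk]

/-- On `ℓ²(ℕ, A)`, the operator `Sᵐ π_α(a b†) (1 − S S†) (S†)ⁿ` equals the rank-one
operator `θ_{f,g}` where `f = δ_m a` and `g = δ_n b`; in particular it is a finite-rank
(hence compact) operator, its output being supported at the single index `m`. -/
theorem shift_piMap_oneSubShift_eq_theta
    {A : Type*} [NonUnitalCStarAlgebra A] (α : A →⋆ₙₐ[ℂ] A)
    (m n : ℕ) (a b : A) :
    (∀ ζ : ℕ → A, Summable (fun j => star (ζ j) * ζ j) →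
      shiftOp^[m] (piMap (⇑α) (a * star b) (oneSubShiftShiftAdj (shiftAdjOp^[n] ζ))) =
        thetaOp (deltaSeq m a) (deltaSeq n b) ζ) ∧
    (∀ ζ : ℕ → A, ∀ k : ℕ, k ≠ m →
      shiftOp^[m] (piMap (⇑α) (a * star b) (oneSubShiftShiftAdj (shiftAdjOp^[n] ζ))) k = 0) := by
  constructor
  · intro ζ _
    funext k
    rw [key]
    simp only [thetaOp, deltaSeq]
    rw [tsum_eq_single n (by intro j hj; simp [hj])]
    simp only [if_pos rfl]
    by_cases h : k = m <;> simp [h, mul_assoc]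
  · intro ζ k hk
    rw [key, if_neg hk]
end
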